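/- For m ≥ 2, the number of pairs (x,y) of non-invertible elements of Z/2^m Z with xy = 0 equals m·2^{m-1}. -/

import Mathlib

open Matrix

def matM {A : Type*} [CommRing A] (x : A) : Matrix (Fin 2) (Fin 2) A := !![x, -1; 1, 0]

def Mn {A : Type*} [CommRing A] {n : ℕ} (a : Fin n → A) : Matrix (Fin 2) (Fin 2) A :=
  ((List.ofFn fun i => matM (a i)).reverse).prod

-- L1: multiples count
lemma aux_L1 (d k : ℕ) (hd : 0 < d) :
    ((Finset.range (d * k)).filter (fun b => d ∣ b)).card = k := by
  rw [Finset.card_nbij' (i := fun b => b / d) (j := fun j => d * j) (t := Finset.range k)]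
  · rw [Finset.card_range]
  · intro a ha
    simp only [Finset.mem_coe, Finset.mem_filter, Finset.mem_range] at ha ⊢
    exact Nat.div_lt_of_lt_mul (by omega)
  · intro a ha
    simp only [Finset.mem_coe, Finset.mem_filter, Finset.mem_range] at ha ⊢
    exact ⟨by exact Nat.mul_lt_mul_left hd |>.mpr ha, dvd_mul_right _ _⟩
  · intro a ha
    simp only [Finset.mem_coe, Finset.mem_filter] at ha
    exact (Nat.mul_div_cancel' ha.2)
  · intro a _
    exact Nat.mul_div_cancel_left a hd

-- L2: count of b in range 2^n with 2^M ∣ a*b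
lemma aux_L2 (n M a : ℕ) (hM : M ≤ n) :
    ((Finset.range (2 ^ n)).filter (fun b => 2 ^ M ∣ a * b)).card
      = 2 ^ (n - M) * Nat.gcd a (2 ^ M) := by
  set g := Nat.gcd a (2 ^ M) with hg
  have hgpos : 0 < g := Nat.gcd_pos_of_pos_right _ (by positivity)
  have hgdvd : g ∣ 2 ^ M := Nat.gcd_dvd_right _ _
  have hga : g ∣ a := Nat.gcd_dvd_left _ _
  set d := 2 ^ M / g with hd
  have hdg : d * g = 2 ^ M := Nat.div_mul_cancel hgdvd
  have hcop : Nat.Coprime (a / g) d := Nat.coprime_div_gcd_div_gcd hgpos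
  have key : ∀ b, (2 ^ M ∣ a * b ↔ d ∣ b) := by
    intro b
    constructor
    · intro h
      have h2 : g * d ∣ g * ((a / g) * b) := by
        rw [← mul_assoc, Nat.mul_div_cancel' hga, mul_comm g d, hdg]
        exact h
      have h3 : d ∣ (a / g) * b := (mul_dvd_mul_iff_left hgpos.ne').mp h2
      exact (Nat.Coprime.dvd_of_dvd_mul_left (Nat.Coprime.symm hcop) h3)
    · intro h
      calc 2 ^ M = g * d := by rw [mul_comm]; exact hdg.symm
      _ ∣ a * b := mul_dvd_mul hga h
  simp only [key]
  have hdpos : 0 < d := Nat.div_pos (Nat.le_of_dvd (by positivity) hgdvd) hgpos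
  have h2n : 2 ^ n = d * (2 ^ (n - M) * g) := by
    rw [← mul_assoc, mul_comm d _, mul_assoc, hdg, ← pow_add]
    congr 1
    omega
  rw [h2n, aux_L1 _ _ hdpos]

-- L3: gcd step
lemma aux_L3 (a M : ℕ) :
    Nat.gcd a (2 ^ (M + 1)) = Nat.gcd a (2 ^ M) + if 2 ^ (M + 1) ∣ a then 2 ^ M else 0 := by
  by_cases h : 2 ^ (M + 1) ∣ a
  · rw [if_pos h, Nat.gcd_eq_right h, Nat.gcd_eq_right (dvd_trans (pow_dvd_pow 2 (Nat.le_succ M)) h)]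
    ring
  · rw [if_neg h, add_zero]
    apply Nat.dvd_antisymm
    · have h1 : Nat.gcd a (2 ^ (M + 1)) ∣ 2 ^ (M + 1) := Nat.gcd_dvd_right _ _
      obtain ⟨k, hk, hek⟩ := (Nat.dvd_prime_pow Nat.prime_two).mp h1
      have hkM : k ≤ M := by
        rcases Nat.lt_or_ge k (M+1) with h'|h'
        · omega
        · exfalso; apply h
          have : k = M + 1 := le_antisymm hk h'
          rw [← this, ← hek]; exact Nat.gcd_dvd_left _ _
      exact Nat.dvd_gcd (Nat.gcd_dvd_left _ _) (by rw [hek]; exact pow_dvd_pow 2 hkM)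
    · exact Nat.dvd_gcd (Nat.gcd_dvd_left _ _)
        (dvd_trans (Nat.gcd_dvd_right _ _) (pow_dvd_pow 2 (Nat.le_succ M)))

-- L4: sum of gcds
lemma aux_L4 (n M : ℕ) (h : M < n) :
    (∑ a ∈ Finset.range (2 ^ n), Nat.gcd a (2 ^ M)) = (M + 2) * 2 ^ (n - 1) := by
  induction M with
  | zero =>
    simp only [pow_zero, Nat.gcd_one_right, Finset.sum_const, Finset.card_range, smul_eq_mul,
      mul_one]
    have e : (2:ℕ)^n = 2^(n-1)*2 := by rw [← pow_succ]; congr 1; omega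
    rw [e]; ring
  | succ M ih =>
    have hM : M < n := by omega
    simp only [aux_L3]
    rw [Finset.sum_add_distrib, ih hM, ← Finset.sum_filter]
    simp only [Finset.sum_const, smul_eq_mul]
    have h2n : (2:ℕ) ^ n = 2 ^ (M + 1) * 2 ^ (n - M - 1) := by
      rw [← pow_add]; congr 1; omega
    rw [h2n, aux_L1 _ _ (by positivity)]
    have e1 : (2:ℕ) ^ (n - M - 1) * 2 ^ M = 2 ^ (n - 1) := by
      rw [← pow_add]; congr 1; omega
    rw [e1]
    ring



theorem stmt6 (m : ℕ) (hm : 2 ≤ m) :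
    Nat.card {p : ZMod (2 ^ m) × ZMod (2 ^ m) //
      ¬IsUnit p.1 ∧ ¬IsUnit p.2 ∧ p.1 * p.2 = 0} = m * 2 ^ (m - 1) := by
  classical
  haveI : NeZero (2 ^ m) := ⟨by positivity⟩
  set T : Finset (ℕ × ℕ) :=
    (Finset.range (2 ^ (m - 1)) ×ˢ Finset.range (2 ^ (m - 1))).filter
      (fun q => 2 ^ (m - 2) ∣ q.1 * q.2) with hT
  have hchar1 : ∀ x : ZMod (2 ^ m), ¬IsUnit x ↔ 2 ∣ x.val := by
    intro x
    have h1 : IsUnit x ↔ Nat.Coprime x.val (2 ^ m) := by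
      conv_lhs => rw [← ZMod.natCast_zmod_val x]
      exact ZMod.isUnit_iff_coprime _ _
    rw [h1, Nat.coprime_pow_right_iff (by omega), Nat.coprime_two_right, Nat.odd_iff]
    omega
  have hchar2 : ∀ x y : ZMod (2 ^ m), x * y = 0 ↔ 2 ^ m ∣ x.val * y.val := by
    intro x y
    conv_lhs => rw [← ZMod.natCast_zmod_val x, ← ZMod.natCast_zmod_val y, ← Nat.cast_mul]
    exact ZMod.natCast_eq_zero_iff _ _
  have hpow : (2:ℕ) ^ m = 4 * 2 ^ (m - 2) := by
    rw [show (4:ℕ) = 2^2 by norm_num, ← pow_add]; congr 1; omega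
  have hpow1 : (2:ℕ) ^ m = 2 * 2 ^ (m - 1) := by
    rw [← pow_succ']; congr 1; omega
  rw [Nat.card_eq_fintype_card, Fintype.card_subtype]
  rw [Finset.card_nbij' (t := T)
    (i := fun p => (p.1.val / 2, p.2.val / 2))
    (j := fun q => (((2 * q.1 : ℕ) : ZMod (2 ^ m)), ((2 * q.2 : ℕ) : ZMod (2 ^ m))))]
  · -- compute T.card
    rw [hT, Finset.card_filter, Finset.sum_product, ]
    have : ∀ a ∈ Finset.range (2 ^ (m - 1)),
        (∑ b ∈ Finset.range (2 ^ (m - 1)), if 2 ^ (m - 2) ∣ a * b then 1 else 0)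
          = 2 ^ ((m-1) - (m-2)) * Nat.gcd a (2 ^ (m - 2)) := by
      intro a _
      rw [← Finset.card_filter]
      exact aux_L2 (m-1) (m-2) a (by omega)
    rw [Finset.sum_congr rfl this]
    have e1 : (m-1) - (m-2) = 1 := by omega
    rw [e1, ← Finset.mul_sum, aux_L4 (m-1) (m-2) (by omega)]
    have e2 : m - 2 + 2 = m := by omega
    have e3 : m - 1 - 1 = m - 2 := by omega
    rw [e2, e3]
    rw [pow_one, show (2:ℕ)^(m-1) = 2 * 2^(m-2) from by rw [← pow_succ']; congr 1; omega]
    ring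
  · -- i maps into T
    rintro ⟨x, y⟩ hp
    simp only [Finset.mem_coe, Finset.mem_filter, Finset.mem_univ, true_and] at hp
    obtain ⟨hx, hy, hxy⟩ := hp
    rw [hchar1] at hx hy
    rw [hchar2] at hxy
    obtain ⟨a, ha⟩ := hx
    obtain ⟨b, hb⟩ := hy
    have hxlt := ZMod.val_lt x
    have hylt := ZMod.val_lt y
    simp only [Finset.mem_coe, hT, Finset.mem_filter, Finset.mem_product, Finset.mem_range, ha, hb,
      Nat.mul_div_cancel_left _ (by norm_num : 0 < 2)]
    refine ⟨⟨by omega, by omega⟩, ?_⟩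
    rw [ha, hb, hpow] at hxy
    have : 4 * 2 ^ (m-2) ∣ 4 * (a * b) := by
      calc 4 * 2 ^ (m-2) ∣ 2 * a * (2 * b) := hxy
      _ = 4 * (a * b) := by ring
    exact (mul_dvd_mul_iff_left (by norm_num : (4:ℕ) ≠ 0)).mp this
  · -- j maps into filter
    rintro ⟨a, b⟩ hq
    simp only [Finset.mem_coe, hT, Finset.mem_filter, Finset.mem_product, Finset.mem_range] at hq
    obtain ⟨⟨halt, hblt⟩, hab⟩ := hq
    have hva : ((2 * a : ℕ) : ZMod (2^m)).val = 2 * a := ZMod.val_cast_of_lt (by omega)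
    have hvb : ((2 * b : ℕ) : ZMod (2^m)).val = 2 * b := ZMod.val_cast_of_lt (by omega)
    simp only [Finset.mem_coe, Finset.mem_filter, Finset.mem_univ, true_and]
    refine ⟨?_, ?_, ?_⟩
    · rw [hchar1, hva]; exact ⟨a, rfl⟩
    · rw [hchar1, hvb]; exact ⟨b, rfl⟩
    · rw [hchar2, hva, hvb, hpow]
      calc 4 * 2 ^ (m-2) ∣ 4 * (a * b) := mul_dvd_mul_left 4 hab
      _ = 2 * a * (2 * b) := by ring
  · -- left inverse
    rintro ⟨x, y⟩ hp
    simp only [Finset.mem_coe, Finset.mem_filter, Finset.mem_univ, true_and] at hp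
    obtain ⟨hx, hy, -⟩ := hp
    rw [hchar1] at hx hy
    have hx2 : (2 * (x.val / 2)) = x.val := Nat.mul_div_cancel' hx
    have hy2 : (2 * (y.val / 2)) = y.val := Nat.mul_div_cancel' hy
    simp only [Prod.mk.injEq]
    constructor
    · rw [hx2, ZMod.natCast_zmod_val]
    · rw [hy2, ZMod.natCast_zmod_val]
  · -- right inverse
    rintro ⟨a, b⟩ hq
    simp only [Finset.mem_coe, hT, Finset.mem_filter, Finset.mem_product, Finset.mem_range] at hq
    obtain ⟨⟨halt, hblt⟩, -⟩ := hq
    simp only [Prod.mk.injEq]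
    constructor
    · rw [ZMod.val_cast_of_lt (by omega), Nat.mul_div_cancel_left _ (by norm_num : 0 < 2)]
    · rw [ZMod.val_cast_of_lt (by omega), Nat.mul_div_cancel_left _ (by norm_num : 0 < 2)]
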